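/- For any two permutations π, ρ of a finite set I, #(π) + #(πρ) + #(ρ) ≤ |I| + 2·#⟨π,ρ⟩, where #⟨π,ρ⟩ is the number of orbits of the subgroup generated by π and ρ. -/

import Mathlib

set_option linter.unusedSectionVars false

namespace Statement5Aux

open Equiv Equiv.Perm MulAction

variable {α : Type*} [Fintype α] [DecidableEq α]

lemma sc_equiv (σ : Perm α) : Equivalence σ.SameCycle :=
  ⟨fun x => SameCycle.refl σ x, SameCycle.symm, SameCycle.trans⟩

lemma quot_mk_eq (σ : Perm α) {x y : α} :
    Quot.mk σ.SameCycle x = Quot.mk σ.SameCycle y ↔ σ.SameCycle x y := by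
  rw [Quot.eq]
  exact (sc_equiv σ).eqvGen_iff

lemma sameCycle_of_pow (σ : Perm α) (x : α) (n : ℕ) : σ.SameCycle x ((σ ^ n) x) :=
  ⟨(n : ℤ), by rw [zpow_natCast]⟩

lemma pow_swap_mul_eq {a b : α} (σ : Perm α) {x : α}
    (ha : ¬(Equiv.swap a b * σ).SameCycle x a) (hb : ¬(Equiv.swap a b * σ).SameCycle x b) :
    ∀ n : ℕ, ((Equiv.swap a b * σ) ^ n) x = (σ ^ n) x := by
  intro n
  induction n with
  | zero => simp
  | succ n ih =>
    have key : ((Equiv.swap a b * σ) ^ (n + 1)) x = Equiv.swap a b ((σ ^ (n + 1)) x) := by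
      simp only [pow_succ', Perm.mul_apply, ih]
    rcases eq_or_ne ((σ ^ (n + 1)) x) a with h | hne_a
    · exact absurd ⟨(((n + 1 : ℕ)) : ℤ), by
        rw [zpow_natCast, key, h, Equiv.swap_apply_left]⟩ hb
    · rcases eq_or_ne ((σ ^ (n + 1)) x) b with h | hne_b
      · exact absurd ⟨(((n + 1 : ℕ)) : ℤ), by
          rw [zpow_natCast, key, h, Equiv.swap_apply_right]⟩ ha
      · rw [key, Equiv.swap_apply_of_ne_of_ne hne_a hne_b]

lemma sameCycle_swap_mul_iff {a b : α} (σ : Perm α) {x : α}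
    (ha : ¬(Equiv.swap a b * σ).SameCycle x a) (hb : ¬(Equiv.swap a b * σ).SameCycle x b)
    (y : α) : (Equiv.swap a b * σ).SameCycle x y ↔ σ.SameCycle x y := by
  constructor
  · intro h
    obtain ⟨i, hi, rfl⟩ := h.exists_pow_eq'
    rw [pow_swap_mul_eq σ ha hb i]
    exact sameCycle_of_pow σ x i
  · intro h
    obtain ⟨i, hi, rfl⟩ := h.exists_pow_eq'
    rw [← pow_swap_mul_eq σ ha hb i]
    exact sameCycle_of_pow _ x i

lemma sameCycle_swap_mul_of_not {a b : α} (σ : Perm α) (h : ¬σ.SameCycle a b) :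
    (Equiv.swap a b * σ).SameCycle a b := by
  have hex : ∃ k, 0 < k ∧ (σ ^ k) a = a :=
    ⟨orderOf σ, orderOf_pos σ, by rw [pow_orderOf_eq_one]; rfl⟩
  classical
  obtain ⟨M, hMpos, hMa, hMmin⟩ :
      ∃ M, 0 < M ∧ (σ ^ M) a = a ∧ ∀ i, i < M → ¬(0 < i ∧ (σ ^ i) a = a) :=
    ⟨Nat.find hex, (Nat.find_spec hex).1, (Nat.find_spec hex).2,
      fun i hi => Nat.find_min hex hi⟩
  have key : ∀ i, i < M → ((Equiv.swap a b * σ) ^ i) a = (σ ^ i) a := by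
    intro i hi
    induction i with
    | zero => simp
    | succ n ih =>
      have ihn := ih (lt_trans (Nat.lt_succ_self n) hi)
      have h1 : (σ ^ (n + 1)) a ≠ a := fun hc => (hMmin (n + 1) hi) ⟨Nat.succ_pos n, hc⟩
      have h2 : (σ ^ (n + 1)) a ≠ b := fun hc =>
        h ⟨(((n + 1 : ℕ)) : ℤ), by rw [zpow_natCast, hc]⟩
      have e1 : ((Equiv.swap a b * σ) ^ (n + 1)) a = Equiv.swap a b ((σ ^ (n + 1)) a) := by
        simp only [pow_succ', Perm.mul_apply, ihn]
      rw [e1, Equiv.swap_apply_of_ne_of_ne h1 h2]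
  refine ⟨(M : ℤ), ?_⟩
  rw [zpow_natCast]
  obtain ⟨m, rfl⟩ : ∃ k, M = k + 1 := ⟨M - 1, (Nat.succ_pred_eq_of_pos hMpos).symm⟩
  have hkey := key m (Nat.lt_succ_self m)
  have e1 : ((Equiv.swap a b * σ) ^ (m + 1)) a = Equiv.swap a b ((σ ^ (m + 1)) a) := by
    simp only [pow_succ', Perm.mul_apply, hkey]
  rw [e1, hMa, Equiv.swap_apply_left]

/-- The common injection used for both swap-multiplication counting lemmas. -/
lemma exists_inj {a b : α} (σ : Perm α) :
    ∃ j : Quot (Equiv.swap a b * σ).SameCycle → Option (Quot σ.SameCycle),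
      Function.Injective j ∧
        (¬σ.SameCycle a b → ∀ p, j p ≠ some (Quot.mk _ a) ∧ j p ≠ some (Quot.mk _ b)) := by
  classical
  set σ' := Equiv.swap a b * σ with hσ'
  set f : α → Option (Quot σ.SameCycle) := fun x =>
    if σ'.SameCycle x a then none
    else if σ'.SameCycle x b then some (Quot.mk _ b)
    else some (Quot.mk _ x) with hf
  have hwd : ∀ x y, σ'.SameCycle x y → f x = f y := by
    intro x y hxy
    by_cases hxa : σ'.SameCycle x a
    · have hya : σ'.SameCycle y a := hxy.symm.trans hxa
      simp [hf, hxa, hya]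
    · have hya : ¬σ'.SameCycle y a := fun hh => hxa (hxy.trans hh)
      by_cases hxb : σ'.SameCycle x b
      · have hyb : σ'.SameCycle y b := hxy.symm.trans hxb
        simp [hf, hxa, hya, hxb, hyb]
      · have hyb : ¬σ'.SameCycle y b := fun hh => hxb (hxy.trans hh)
        have hsc : σ.SameCycle x y := (sameCycle_swap_mul_iff σ hxa hxb y).mp hxy
        simp only [hf, if_neg hxa, if_neg hya, if_neg hxb, if_neg hyb]
        exact congrArg some (Quot.sound hsc)
  refine ⟨Quot.lift f hwd, ?_, ?_⟩
  · intro p q hpq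
    obtain ⟨x, rfl⟩ := Quot.exists_rep p
    obtain ⟨y, rfl⟩ := Quot.exists_rep q
    change f x = f y at hpq
    refine Quot.sound ?_
    by_cases hxa : σ'.SameCycle x a <;> by_cases hya : σ'.SameCycle y a
    · exact hxa.trans hya.symm
    · exfalso; by_cases hyb : σ'.SameCycle y b <;> simp [hf, hxa, hya, hyb] at hpq
    · exfalso; by_cases hxb : σ'.SameCycle x b <;> simp [hf, hxa, hya, hxb] at hpq
    · by_cases hxb : σ'.SameCycle x b <;> by_cases hyb : σ'.SameCycle y b
      · exact hxb.trans hyb.symm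
      · exfalso
        simp only [hf, if_neg hxa, if_neg hya, if_pos hxb, if_neg hyb,
          Option.some.injEq] at hpq
        have : σ.SameCycle b y := (quot_mk_eq σ).mp hpq
        exact ((sameCycle_swap_mul_iff σ hya hyb b).not.mp hyb) this.symm
      · exfalso
        simp only [hf, if_neg hxa, if_neg hya, if_neg hxb, if_pos hyb,
          Option.some.injEq] at hpq
        have : σ.SameCycle x b := (quot_mk_eq σ).mp hpq
        exact ((sameCycle_swap_mul_iff σ hxa hxb b).not.mp hxb) this
      · simp only [hf, if_neg hxa, if_neg hya, if_neg hxb, if_neg hyb,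
          Option.some.injEq] at hpq
        have : σ.SameCycle x y := (quot_mk_eq σ).mp hpq
        exact (sameCycle_swap_mul_iff σ hxa hxb y).mpr this
  · intro hn p
    obtain ⟨x, rfl⟩ := Quot.exists_rep p
    change f x ≠ _ ∧ f x ≠ _
    by_cases hxa : σ'.SameCycle x a
    · simp [hf, hxa]
    · by_cases hxb : σ'.SameCycle x b
      · exact absurd (hxb.trans (sameCycle_swap_mul_of_not σ hn).symm) hxa
      · have h1 : ¬σ.SameCycle x a := (sameCycle_swap_mul_iff σ hxa hxb a).not.mp hxa
        have h2 : ¬σ.SameCycle x b := (sameCycle_swap_mul_iff σ hxa hxb b).not.mp hxb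
        constructor
        · simp only [hf, if_neg hxa, if_neg hxb, ne_eq, Option.some.injEq]
          exact fun hc => h1 ((quot_mk_eq σ).mp hc)
        · simp only [hf, if_neg hxa, if_neg hxb, ne_eq, Option.some.injEq]
          exact fun hc => h2 ((quot_mk_eq σ).mp hc)

lemma card_quot_swap_mul_le {a b : α} (σ : Perm α) :
    Nat.card (Quot (Equiv.swap a b * σ).SameCycle) ≤ Nat.card (Quot σ.SameCycle) + 1 := by
  obtain ⟨j, hinj, -⟩ := exists_inj (a := a) (b := b) σ
  haveI := Fintype.ofFinite (Quot σ.SameCycle)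
  have := Nat.card_le_card_of_injective j hinj
  rwa [Finite.card_option] at this

lemma card_quot_swap_mul_add_one_le {a b : α} (σ : Perm α) (hab : a ≠ b)
    (h : ¬σ.SameCycle a b) :
    Nat.card (Quot (Equiv.swap a b * σ).SameCycle) + 1 ≤ Nat.card (Quot σ.SameCycle) := by
  obtain ⟨j, hinj, hmiss⟩ := exists_inj (a := a) (b := b) σ
  haveI := Fintype.ofFinite (Quot σ.SameCycle)
  haveI := Fintype.ofFinite (Quot (Equiv.swap a b * σ).SameCycle)
  set g : Quot (Equiv.swap a b * σ).SameCycle ⊕ Bool → Option (Quot σ.SameCycle) :=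
    Sum.elim j (fun c => if c then some (Quot.mk _ a) else some (Quot.mk _ b)) with hg
  have hab' : ¬σ.SameCycle a b := h
  have hgi : Function.Injective g := by
    rintro (p | c) (q | d) hpq
    · exact congrArg Sum.inl (hinj hpq)
    · exfalso
      rcases d with _ | _ <;> simp only [hg, Sum.elim_inl, Sum.elim_inr, if_true, if_false,
        Bool.false_eq_true, ite_false, ite_true] at hpq
      · exact (hmiss h p).2 hpq
      · exact (hmiss h p).1 hpq
    · exfalso
      rcases c with _ | _ <;> simp only [hg, Sum.elim_inl, Sum.elim_inr, if_true, if_false,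
        Bool.false_eq_true, ite_false, ite_true] at hpq
      · exact (hmiss h q).2 hpq.symm
      · exact (hmiss h q).1 hpq.symm
    · rcases c with _ | _ <;> rcases d with _ | _
      · rfl
      · exfalso
        simp only [hg, Sum.elim_inr, Bool.false_eq_true, ite_false, ite_true,
          Option.some.injEq] at hpq
        exact h ((quot_mk_eq σ).mp hpq).symm
      · exfalso
        simp only [hg, Sum.elim_inr, Bool.false_eq_true, ite_false, ite_true,
          Option.some.injEq] at hpq
        exact h ((quot_mk_eq σ).mp hpq)
      · rfl
  have hcard := Nat.card_le_card_of_injective g hgi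
  rw [Nat.card_sum, Finite.card_option] at hcard
  have : Nat.card Bool = 2 := by simp [Nat.card_eq_fintype_card]
  omega

lemma card_quot_one : Nat.card (Quot (1 : Perm α).SameCycle) = Fintype.card α := by
  have hbij : Function.Bijective (Quot.mk (1 : Perm α).SameCycle) := by
    constructor
    · intro x y hxy
      exact sameCycle_one.mp ((quot_mk_eq 1).mp hxy)
    · exact Quot.mk_surjective
  rw [← Nat.card_eq_fintype_card]
  exact (Nat.card_eq_of_bijective _ hbij).symm

lemma not_sameCycle_of_fixed {σ : Perm α} {x y : α} (hx : σ x = x)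
    (hxy : σ.SameCycle x y) : y = x := by
  obtain ⟨i, rfl⟩ := hxy
  exact zpow_apply_eq_self_of_apply_eq_self hx i

lemma exists_factorization (σ : Perm α) :
    ∃ L : List (Perm α), (∀ t ∈ L, ∃ a b : α, a ≠ b ∧ t = Equiv.swap a b) ∧ L.prod = σ ∧
      L.length + Nat.card (Quot σ.SameCycle) = Fintype.card α := by
  generalize hk : σ.support.card = k
  induction k using Nat.strong_induction_on generalizing σ with
  | _ k IH =>
    by_cases h1 : σ = 1
    · subst h1
      exact ⟨[], by simp, by simp, by simp [card_quot_one]⟩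
    · obtain ⟨x, hx⟩ : ∃ x, σ x ≠ x := by
        by_contra hc
        push_neg at hc
        exact h1 (Equiv.ext fun y => (hc y).trans (Equiv.Perm.one_apply y).symm)
      have hlt : (Equiv.swap x (σ x) * σ).support.card < k := hk ▸ card_support_swap_mul hx
      obtain ⟨L, hL, hprod, hlen⟩ := IH _ hlt (Equiv.swap x (σ x) * σ) rfl
      refine ⟨Equiv.swap x (σ x) :: L, ?_, ?_, ?_⟩
      · intro t ht
        rcases List.mem_cons.mp ht with hh | hh
        · exact ⟨x, σ x, Ne.symm hx, hh⟩
        · exact hL t hh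
      · rw [List.prod_cons, hprod, swap_mul_self_mul]
      · have hfix : (Equiv.swap x (σ x) * σ) x = x := by
          rw [Perm.mul_apply, Equiv.swap_apply_right]
        have hns : ¬(Equiv.swap x (σ x) * σ).SameCycle x (σ x) := fun hc =>
          hx (not_sameCycle_of_fixed hfix hc)
        have hle1 : Nat.card (Quot (Equiv.swap x (σ x) * σ).SameCycle) ≤
            Nat.card (Quot σ.SameCycle) + 1 := card_quot_swap_mul_le σ
        have hle2 : Nat.card (Quot σ.SameCycle) + 1 ≤
            Nat.card (Quot (Equiv.swap x (σ x) * σ).SameCycle) := by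
          have := card_quot_swap_mul_add_one_le (Equiv.swap x (σ x) * σ) (Ne.symm hx) hns
          rwa [swap_mul_self_mul] at this
        simp only [List.length_cons]
        omega

lemma card_orbitQuot_le_of_le {H K : Subgroup (Perm α)} (hHK : H ≤ K) :
    Nat.card (orbitRel.Quotient K α) ≤ Nat.card (orbitRel.Quotient H α) := by
  have hrel : ∀ x y : α, (orbitRel H α) x y → (orbitRel K α) x y := by
    intro x y hxy
    rw [orbitRel_apply] at hxy ⊢
    obtain ⟨g, hg⟩ := hxy
    exact ⟨⟨g.1, hHK g.2⟩, hg⟩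
  have hsurj : Function.Surjective
      (Quot.map id hrel : orbitRel.Quotient H α → orbitRel.Quotient K α) := by
    intro q
    obtain ⟨x, rfl⟩ := Quot.exists_rep q
    exact ⟨Quot.mk _ x, rfl⟩
  exact Nat.card_le_card_of_surjective _ hsurj

lemma card_orbitQuot_bot :
    Nat.card (orbitRel.Quotient (⊥ : Subgroup (Perm α)) α) = Fintype.card α := by
  have hbij : Function.Bijective
      (Quotient.mk'' : α → orbitRel.Quotient (⊥ : Subgroup (Perm α)) α) := by
    constructor
    · intro x y hxy
      have hrel : x ∈ orbit (⊥ : Subgroup (Perm α)) y := Quotient.eq''.mp hxy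
      obtain ⟨g, hg⟩ := hrel
      have hone : (g : Perm α) = 1 := Subgroup.mem_bot.mp g.2
      have hg' : (g : Perm α) • y = x := hg
      rw [← hg', hone, one_smul]
    · intro q
      obtain ⟨x, rfl⟩ := Quot.exists_rep q
      exact ⟨x, rfl⟩
  rw [← Nat.card_eq_fintype_card]
  exact (Nat.card_eq_of_bijective _ hbij).symm

lemma card_orbitQuot_insert_swap_le {a b : α} {S : Set (Perm α)}
    (hmem : a ∈ orbit (Subgroup.closure S) b) :
    Nat.card (orbitRel.Quotient (Subgroup.closure S) α) ≤
      Nat.card (orbitRel.Quotient (Subgroup.closure (insert (Equiv.swap a b) S)) α) := by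
  set G' := Subgroup.closure S with hG'
  have key : ∀ g ∈ Subgroup.closure (insert (Equiv.swap a b) S), ∀ x : α,
      g • x ∈ orbit G' x := by
    intro g hg
    induction hg using Subgroup.closure_induction with
    | mem t ht =>
      intro x
      rcases Set.mem_insert_iff.mp ht with rfl | hts
      · rcases eq_or_ne x a with rfl | hxa
        · have : Equiv.swap x b • x = b := by
            simp [Equiv.Perm.smul_def]
          rw [this, orbit_eq_iff.mpr hmem]
          exact mem_orbit_self b
        · rcases eq_or_ne x b with rfl | hxb
          · have : Equiv.swap a x • x = a := by
              simp [Equiv.Perm.smul_def]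
            rw [this]
            exact hmem
          · have : Equiv.swap a b • x = x := by
              simp [Equiv.Perm.smul_def, Equiv.swap_apply_of_ne_of_ne hxa hxb]
            rw [this]
            exact mem_orbit_self x
      · exact mem_orbit x (⟨t, Subgroup.subset_closure hts⟩ : G')
    | one =>
      intro x
      rw [one_smul]
      exact mem_orbit_self x
    | mul g h hgc hhc ihg ihh =>
      intro x
      rw [mul_smul]
      have h1 := ihh x
      have h2 := ihg (h • x)
      rwa [orbit_eq_iff.mpr h1] at h2
    | inv g hgc ihg =>
      intro x
      have h1 := ihg (g⁻¹ • x)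
      rw [smul_inv_smul] at h1
      rw [orbit_eq_iff.mpr h1]
      exact mem_orbit_self _
  have hrel : ∀ x y : α, (orbitRel (Subgroup.closure (insert (Equiv.swap a b) S)) α) x y →
      (orbitRel G' α) x y := by
    intro x y hxy
    rw [orbitRel_apply] at hxy ⊢
    obtain ⟨g, hg⟩ := hxy
    have := key g.1 g.2 y
    rwa [show g.1 • y = x from hg] at this
  have hsurj : Function.Surjective
      (Quot.map id hrel : orbitRel.Quotient (Subgroup.closure (insert (Equiv.swap a b) S)) α →
        orbitRel.Quotient G' α) := by
    intro q
    obtain ⟨x, rfl⟩ := Quot.exists_rep q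
    exact ⟨Quot.mk _ x, rfl⟩
  exact Nat.card_le_card_of_surjective _ hsurj

lemma card_orbitQuot_le_insert_swap_add_one {a b : α} {S : Set (Perm α)} :
    Nat.card (orbitRel.Quotient (Subgroup.closure S) α) ≤
      Nat.card (orbitRel.Quotient (Subgroup.closure (insert (Equiv.swap a b) S)) α) + 1 := by
  classical
  set G' := Subgroup.closure S with hG'
  set G := Subgroup.closure (insert (Equiv.swap a b) S) with hG
  set U : Set α := orbit G' a ∪ orbit G' b with hU
  have hUorb : ∀ {z w : α}, z ∈ U → w ∈ orbit G' z → w ∈ U := by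
    intro z w hz hw
    rcases hz with hz | hz
    · exact Or.inl (by rwa [orbit_eq_iff.mpr hz] at hw)
    · exact Or.inr (by rwa [orbit_eq_iff.mpr hz] at hw)
  have key : ∀ g ∈ G, ∀ x : α, g • x ∈ orbit G' x ∨ (x ∈ U ∧ g • x ∈ U) := by
    intro g hg
    induction hg using Subgroup.closure_induction with
    | mem t ht =>
      intro x
      rcases Set.mem_insert_iff.mp ht with rfl | hts
      · rcases eq_or_ne x a with rfl | hxa
        · refine Or.inr ⟨Or.inl (mem_orbit_self x), ?_⟩
          have : Equiv.swap x b • x = b := by simp [Equiv.Perm.smul_def]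
          rw [this]
          exact Or.inr (mem_orbit_self b)
        · rcases eq_or_ne x b with rfl | hxb
          · refine Or.inr ⟨Or.inr (mem_orbit_self x), ?_⟩
            have : Equiv.swap a x • x = a := by simp [Equiv.Perm.smul_def]
            rw [this]
            exact Or.inl (mem_orbit_self a)
          · have : Equiv.swap a b • x = x := by
              simp [Equiv.Perm.smul_def, Equiv.swap_apply_of_ne_of_ne hxa hxb]
            rw [this]
            exact Or.inl (mem_orbit_self x)
      · exact Or.inl (mem_orbit x (⟨t, Subgroup.subset_closure hts⟩ : G'))
    | one =>
      intro x
      rw [one_smul]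
      exact Or.inl (mem_orbit_self x)
    | mul g h hgc hhc ihg ihh =>
      intro x
      rw [mul_smul]
      rcases ihh x with h1 | ⟨h1, h2⟩
      · rcases ihg (h • x) with h2 | ⟨h2, h3⟩
        · left
          rwa [orbit_eq_iff.mpr h1] at h2
        · right
          refine ⟨?_, h3⟩
          apply hUorb h2
          rw [orbit_eq_iff.mpr h1]
          exact mem_orbit_self x
      · rcases ihg (h • x) with h3 | ⟨h3, h4⟩
        · exact Or.inr ⟨h1, hUorb h2 h3⟩
        · exact Or.inr ⟨h1, h4⟩
    | inv g hgc ihg =>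
      intro x
      rcases ihg (g⁻¹ • x) with h1 | ⟨h1, h2⟩
      · rw [smul_inv_smul] at h1
        left
        rw [orbit_eq_iff.mpr h1]
        exact mem_orbit_self _
      · rw [smul_inv_smul] at h2
        exact Or.inr ⟨h2, h1⟩
  have hmono : ∀ {x y : α}, x ∈ orbit G' y → x ∈ orbit G y := by
    intro x y hxy
    obtain ⟨g, hg⟩ := hxy
    exact ⟨⟨g.1, Subgroup.closure_mono (Set.subset_insert _ _) g.2⟩, hg⟩
  -- the injection
  set f : α → Option (orbitRel.Quotient G α) := fun x =>
    if x ∈ orbit G' b then none else some (Quotient.mk'' x) with hf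
  have hwd : ∀ x y : α, (orbitRel G' α) x y → f x = f y := by
    intro x y hxy
    rw [orbitRel_apply] at hxy
    by_cases hyb : y ∈ orbit G' b
    · have hxb : x ∈ orbit G' b := by rwa [orbit_eq_iff.mpr hyb] at hxy
      simp [hf, hxb, hyb]
    · have hxb : x ∉ orbit G' b := by
        intro hc
        exact hyb (orbit_eq_iff.mp
          ((orbit_eq_iff.mpr hxy).symm.trans (orbit_eq_iff.mpr hc)))
      simp only [hf, if_neg hxb, if_neg hyb]
      exact congrArg some (Quotient.sound' (hmono hxy))
  have hinj : Function.Injective (Quot.lift f hwd :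
      orbitRel.Quotient G' α → Option (orbitRel.Quotient G α)) := by
    intro p q hpq
    obtain ⟨x, rfl⟩ := Quot.exists_rep p
    obtain ⟨y, rfl⟩ := Quot.exists_rep q
    change f x = f y at hpq
    refine Quot.sound ?_
    show (orbitRel G' α) x y
    rw [orbitRel_apply]
    by_cases hxb : x ∈ orbit G' b <;> by_cases hyb : y ∈ orbit G' b
    · rw [orbit_eq_iff.mpr hyb]
      exact hxb
    · simp [hf, hxb, hyb] at hpq
    · simp [hf, hxb, hyb] at hpq
    · simp only [hf, if_neg hxb, if_neg hyb, Option.some.injEq] at hpq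
      have hrelG : x ∈ orbit G y := Quotient.eq''.mp hpq
      obtain ⟨g, hg⟩ := hrelG
      rcases key g.1 g.2 y with h1 | ⟨h1, h2⟩
      · rwa [show g.1 • y = x from hg] at h1
      · rw [show g.1 • y = x from hg] at h2
        have hya : y ∈ orbit G' a := h1.resolve_right hyb
        have hxa : x ∈ orbit G' a := h2.resolve_right hxb
        rw [orbit_eq_iff.mpr hya]
        exact hxa
  haveI := Fintype.ofFinite (orbitRel.Quotient G α)
  have := Nat.card_le_card_of_injective _ hinj
  rwa [Finite.card_option] at this

lemma master (L : List (Perm α)) (hL : ∀ t ∈ L, ∃ a b : α, a ≠ b ∧ t = Equiv.swap a b) :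
    Fintype.card α + Nat.card (Quot L.prod.SameCycle) ≤
      L.length + 2 * Nat.card (orbitRel.Quotient (Subgroup.closure {g : Perm α | g ∈ L}) α) := by
  induction L with
  | nil =>
    have hset : {g : Perm α | g ∈ ([] : List (Perm α))} = (∅ : Set (Perm α)) := by simp
    rw [List.prod_nil, List.length_nil, card_quot_one, hset, Subgroup.closure_empty,
      card_orbitQuot_bot]
    omega
  | cons t L IH =>
    obtain ⟨a, b, hab, rfl⟩ := hL t List.mem_cons_self
    have hL' : ∀ t ∈ L, ∃ a b : α, a ≠ b ∧ t = Equiv.swap a b := fun t ht =>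
      hL t (List.mem_cons_of_mem _ ht)
    have IH' := IH hL'
    have hset : {g : Perm α | g ∈ Equiv.swap a b :: L} =
        insert (Equiv.swap a b) {g : Perm α | g ∈ L} := by
      ext g; simp [List.mem_cons]
    rw [List.prod_cons, List.length_cons, hset]
    set G' := Subgroup.closure {g : Perm α | g ∈ L} with hG'
    by_cases hmem : a ∈ orbit G' b
    · have h1 := card_quot_swap_mul_le (a := a) (b := b) L.prod
      have h2 := card_orbitQuot_insert_swap_le (S := {g : Perm α | g ∈ L}) hmem
      rw [← hG'] at h2
      omega
    · have hns : ¬L.prod.SameCycle a b := by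
        intro hc
        obtain ⟨i, hi⟩ := hc
        apply hmem
        have hσ : L.prod ∈ G' :=
          Subgroup.list_prod_mem _ (fun x hx => Subgroup.subset_closure hx)
        have hb : b ∈ orbit G' a := ⟨⟨L.prod ^ i, Subgroup.zpow_mem G' hσ i⟩, hi⟩
        rw [orbit_eq_iff.mpr hb]
        exact mem_orbit_self a
      have h1 := card_quot_swap_mul_add_one_le L.prod hab hns
      have h2 := card_orbitQuot_le_insert_swap_add_one (a := a) (b := b)
        (S := {g : Perm α | g ∈ L})
      rw [← hG'] at h2
      omega

end Statement5Aux

/-- for permutations `π, ρ` of a finite set,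
`#(π) + #(πρ) + #(ρ) ≤ |I| + 2·#⟨π,ρ⟩`. -/
theorem statement5 {α : Type*} [Fintype α] (π ρ : Equiv.Perm α) :
    Nat.card (Quot π.SameCycle) + Nat.card (Quot (π * ρ).SameCycle) +
        Nat.card (Quot ρ.SameCycle) ≤
      Fintype.card α +
        2 * Nat.card (MulAction.orbitRel.Quotient (Subgroup.closure {π, ρ}) α) := by
  classical
  obtain ⟨Lp, hLp, hpp, hcp⟩ := Statement5Aux.exists_factorization π
  obtain ⟨Lr, hLr, hpr, hcr⟩ := Statement5Aux.exists_factorization ρ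
  have hmaster := Statement5Aux.master (Lp ++ Lr) (by
    intro t ht
    rcases List.mem_append.mp ht with h | h
    exacts [hLp t h, hLr t h])
  rw [List.prod_append, hpp, hpr, List.length_append] at hmaster
  have hle : Subgroup.closure {π, ρ} ≤ Subgroup.closure {g : Equiv.Perm α | g ∈ Lp ++ Lr} := by
    rw [Subgroup.closure_le]
    rintro x (rfl | rfl)
    · rw [← hpp]
      exact SetLike.mem_coe.mpr (Subgroup.list_prod_mem _ (fun g hg =>
        Subgroup.subset_closure (show g ∈ {g : Equiv.Perm α | g ∈ Lp ++ Lr} from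
          List.mem_append.mpr (Or.inl hg))))
    · rw [← hpr]
      exact SetLike.mem_coe.mpr (Subgroup.list_prod_mem _ (fun g hg =>
        Subgroup.subset_closure (show g ∈ {g : Equiv.Perm α | g ∈ Lp ++ Lr} from
          List.mem_append.mpr (Or.inr hg))))
  have hmono := Statement5Aux.card_orbitQuot_le_of_le hle
  omega
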